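/- arXiv:1309.0661 — 3 statements merged into one kernel-verified Lean document; each statement's English description precedes it below -/
import Mathlib

section
/- Let w₀, w₁, w₂, d be positive integers, let Q(X) = (1+dX)·(1+w₀X)⁻¹ ∈ ℚ[[X]], let γ₁, γ₂, γ₃ ∈ ℚ be the coefficients of X, X², X³ in Q, and set S₀ = d/w₀, S₂ = S₀γ₁², S₀₁ = S₀γ₂. Then (γ₁S₂ + γ₁S₀₁ − 6γ₁³ − 12γ₁γ₂ − 6γ₃)/(w₀w₁w₂) = (d−w₀)(d−2w₀)(d−3w₀)(d−4w₀)/(w₀²w₁w₂). -/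
open PowerSeries

/-- The linear power series `1 + r·X` over `ℚ`. -/
noncomputable def lin (r : ℚ) : ℚ⟦X⟧ := 1 + C r * X

lemma lin_inv (r : ℚ) : (lin r)⁻¹ = mk fun n => (-r)^n := by
  symm
  rw [PowerSeries.eq_inv_iff_mul_eq_one]
  · ext n
    cases n with
    | zero => simp [lin]
    | succ m =>
      rw [coeff_mul, Finset.Nat.sum_antidiagonal_eq_sum_range_succ_mk]
      have h0 : ∀ i ∈ Finset.range m, coeff i (mk fun n => (-r)^n) * coeff (m+1-i) (lin r) = 0 := by
        intro i hi
        simp only [Finset.mem_range] at hi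
        have h2 : m+1-i ≥ 2 := by omega
        have : coeff (m+1-i) (lin r) = 0 := by
          rw [show m+1-i = (m-1-i)+2 by omega]
          simp [lin, coeff_one, coeff_X]
        simp [this]
      rw [Finset.sum_range_succ, Finset.sum_range_succ, Finset.sum_eq_zero h0]
      cases m with
      | zero => simp [lin, coeff_one, coeff_X]
      | succ k =>
        simp [lin, coeff_one, coeff_X, pow_succ]
  · simp [lin]

lemma coeff_q (r s : ℚ) (n : ℕ) :
    coeff (n+1) (lin s * (lin r)⁻¹) = (-r)^(n+1) + s * (-r)^n := by
  rw [lin_inv, coeff_mul, Finset.Nat.sum_antidiagonal_eq_sum_range_succ_mk]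
  rw [← Finset.sum_subset (Finset.range_subset_range.2 (by omega : 2 ≤ n+2))]
  · rw [Finset.sum_range_succ, Finset.sum_range_one]
    simp [lin, coeff_one, coeff_X]
  · intro i hi hni
    simp only [Finset.mem_range] at hi hni
    have : coeff i (lin s) = 0 := by
      rw [show i = (i-2)+2 by omega]
      simp [lin, coeff_one, coeff_X]
    simp [this]

theorem stmt_5 (w₀ w₁ w₂ d : ℕ) (hw₀ : 0 < w₀) (hw₁ : 0 < w₁) (hw₂ : 0 < w₂)
    (hd : 0 < d)
    (Q : ℚ⟦X⟧) (hQ : Q = lin (d : ℚ) * (lin (w₀ : ℚ))⁻¹)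
    (γ₁ γ₂ γ₃ : ℚ) (hγ₁ : γ₁ = coeff 1 Q) (hγ₂ : γ₂ = coeff 2 Q)
    (hγ₃ : γ₃ = coeff 3 Q)
    (S₀ S₂ S₀₁ : ℚ) (hS₀ : S₀ = (d : ℚ) / (w₀ : ℚ))
    (hS₂ : S₂ = S₀ * γ₁ ^ 2) (hS₀₁ : S₀₁ = S₀ * γ₂) :
    (γ₁ * S₂ + γ₁ * S₀₁ - 6 * γ₁ ^ 3 - 12 * γ₁ * γ₂ - 6 * γ₃) /
        ((w₀ : ℚ) * (w₁ : ℚ) * (w₂ : ℚ)) =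
      ((d : ℚ) - (w₀ : ℚ)) * ((d : ℚ) - 2 * (w₀ : ℚ)) * ((d : ℚ) - 3 * (w₀ : ℚ)) *
          ((d : ℚ) - 4 * (w₀ : ℚ)) /
        ((w₀ : ℚ) ^ 2 * (w₁ : ℚ) * (w₂ : ℚ)) := by
  have h1 : γ₁ = (-(w₀:ℚ))^1 + d * (-(w₀:ℚ))^0 := by rw [hγ₁, hQ]; exact coeff_q _ _ 0
  have h2 : γ₂ = (-(w₀:ℚ))^2 + d * (-(w₀:ℚ))^1 := by rw [hγ₂, hQ]; exact coeff_q _ _ 1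
  have h3 : γ₃ = (-(w₀:ℚ))^3 + d * (-(w₀:ℚ))^2 := by rw [hγ₃, hQ]; exact coeff_q _ _ 2
  have hw : (w₀:ℚ) ≠ 0 := Nat.cast_ne_zero.2 hw₀.ne'
  have hw1 : (w₁:ℚ) ≠ 0 := Nat.cast_ne_zero.2 hw₁.ne'
  have hw2 : (w₂:ℚ) ≠ 0 := Nat.cast_ne_zero.2 hw₂.ne'
  subst hS₂ hS₀₁ hS₀ h1 h2 h3
  field_simp
  ring
end

section
/- Let w₀, w₁, w₂, d be positive integers, let Q(X) = (1+dX)·(1+w₀X)⁻¹ ∈ ℚ[[X]], let γ₁, γ₂, γ₃ ∈ ℚ be the coefficients of X, X², X³ in Q, and set S₀ = d/w₀, S₁ = S₀γ₁, S₂ = S₀γ₁², S₀₁ = S₀γ₂. Then (1/(3w₀w₁w₂))·(1/2)·( γ₁S₁² − 4γ₂S₁ − 4γ₁S₂ − 2γ₁S₀₁ − 8γ₁²S₁ + 40γ₁³ + 56γ₁γ₂ + 24γ₃ ) = (d−w₀)(d−2w₀)(d−3w₀)(d−4w₀)(d−5w₀)/(6w₀³w₁w₂). -/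
open PowerSeries

lemma lin_const (r : ℚ) : constantCoeff (lin r) ≠ 0 := by
  simp [lin]

lemma coeff_lin_mul (w : ℚ) (Q : ℚ⟦X⟧) (n : ℕ) :
    coeff (n+1) (Q * lin w) = coeff (n+1) Q + w * coeff n Q := by
  have : Q * lin w = Q + C w * (Q * X) := by ring_nf; rw [lin]; ring
  rw [this]
  simp [coeff_succ_mul_X, mul_comm]

lemma coeffQ (d w : ℚ) (n : ℕ) :
    coeff (n+1) (lin d * (lin w)⁻¹) = (d - w) * (-w)^n := by
  set Q := lin d * (lin w)⁻¹ with hQ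
  have hmul : Q * lin w = lin d := by
    rw [hQ, mul_assoc, PowerSeries.inv_mul_cancel _ (lin_const w), mul_one]
  have h0 : coeff 0 Q = 1 := by
    have := congrArg (coeff 0) hmul
    simpa [lin, mul_comm] using this
  induction n with
  | zero =>
    have := congrArg (coeff 1) hmul
    rw [coeff_lin_mul, h0] at this
    simp [lin] at this
    simp; linarith
  | succ n ih =>
    have := congrArg (coeff (n+2)) hmul
    rw [coeff_lin_mul] at this
    rw [ih] at this
    have hl : coeff (n+2) (lin d) = 0 := by
      simp [lin, coeff_C_mul, coeff_X]
    rw [hl] at this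
    have : coeff (n+2) Q = -(w * ((d - w) * (-w)^n)) := by linarith
    rw [this]; ring

theorem stmt_6 (w₀ w₁ w₂ d : ℕ) (hw₀ : 0 < w₀) (hw₁ : 0 < w₁) (hw₂ : 0 < w₂)
    (hd : 0 < d)
    (Q : ℚ⟦X⟧) (hQ : Q = lin (d : ℚ) * (lin (w₀ : ℚ))⁻¹)
    (γ₁ γ₂ γ₃ : ℚ) (hγ₁ : γ₁ = coeff 1 Q) (hγ₂ : γ₂ = coeff 2 Q)
    (hγ₃ : γ₃ = coeff 3 Q)
    (S₀ S₁ S₂ S₀₁ : ℚ) (hS₀ : S₀ = (d : ℚ) / (w₀ : ℚ)) (hS₁ : S₁ = S₀ * γ₁)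
    (hS₂ : S₂ = S₀ * γ₁ ^ 2) (hS₀₁ : S₀₁ = S₀ * γ₂) :
    (1 / (3 * (w₀ : ℚ) * (w₁ : ℚ) * (w₂ : ℚ))) * (1 / 2) *
        (γ₁ * S₁ ^ 2 - 4 * γ₂ * S₁ - 4 * γ₁ * S₂ - 2 * γ₁ * S₀₁ - 8 * γ₁ ^ 2 * S₁
          + 40 * γ₁ ^ 3 + 56 * γ₁ * γ₂ + 24 * γ₃) =
      ((d : ℚ) - (w₀ : ℚ)) * ((d : ℚ) - 2 * (w₀ : ℚ)) * ((d : ℚ) - 3 * (w₀ : ℚ)) *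
          ((d : ℚ) - 4 * (w₀ : ℚ)) * ((d : ℚ) - 5 * (w₀ : ℚ)) /
        (6 * (w₀ : ℚ) ^ 3 * (w₁ : ℚ) * (w₂ : ℚ)) := by
  have hw₀' : (w₀ : ℚ) ≠ 0 := Nat.cast_ne_zero.2 hw₀.ne'
  have hw₁' : (w₁ : ℚ) ≠ 0 := Nat.cast_ne_zero.2 hw₁.ne'
  have hw₂' : (w₂ : ℚ) ≠ 0 := Nat.cast_ne_zero.2 hw₂.ne'
  have h1 : γ₁ = ((d : ℚ) - w₀) := by
    rw [hγ₁, hQ]; simpa using coeffQ (d : ℚ) (w₀ : ℚ) 0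
  have h2 : γ₂ = ((d : ℚ) - w₀) * (-(w₀:ℚ)) := by
    rw [hγ₂, hQ]; simpa using coeffQ (d : ℚ) (w₀ : ℚ) 1
  have h3 : γ₃ = ((d : ℚ) - w₀) * (w₀:ℚ)^2 := by
    rw [hγ₃, hQ]
    have := coeffQ (d : ℚ) (w₀ : ℚ) 2
    norm_num at this ⊢
    rw [this]
  subst hS₁ hS₂ hS₀₁ hS₀ h1 h2 h3
  field_simp
  ring
end

section
/- Let w₁, w₂, d₁, d₂, d₃ be positive integers, let Q(X) = (1+d₁X)(1+d₂X)(1+d₃X)·((1+w₁X)(1+w₂X))⁻¹ ∈ ℚ[[X]], let γ₁, γ₂ ∈ ℚ be the coefficients of X and X² in Q, set S₀ = d₁d₂d₃/(w₁w₂) and S₁ = S₀γ₁, and let T(X) = 1 + ½(γ₁−S₀)X + (1/6)(S₀² + 2S₁ − 2γ₁S₀ − γ₁² − γ₂)X². Then −1 + (1/(w₁w₂))·(coefficient of X² in (1+w₁X)(1+w₂X)·T(X)) = (1/(6w₁³w₂³))·( d₁²(d₂²d₃² − w₁²w₂²) − w₁²w₂²( d₂² + d₃² + 5w₁² + 9w₁w₂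 + 5w₂² − 6d₃(w₁+w₂) + 3d₂(d₃ − 2(w₁+w₂)) ) − 3d₁w₁w₂( w₁w₂(d₃ − 2(w₁+w₂)) + d₂(w₁w₂ + d₃(w₁+w₂)) ) ). -/
open PowerSeries

lemma lin_mul_lin (a b : ℚ) : lin a * lin b = 1 + C (a+b) * X + C (a*b) * X^2 := by
  simp only [lin, map_add, map_mul]; ring

lemma coeff_mul_poly2 (φ : ℚ⟦X⟧) (e₁ e₂ : ℚ) (n : ℕ) :
    coeff (n+2) (φ * (1 + C e₁ * X + C e₂ * X^2)) =
      coeff (n+2) φ + e₁ * coeff (n+1) φ + e₂ * coeff n φ := by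
  rw [mul_add, mul_add, mul_one, map_add, map_add,
      show φ * (C e₁ * X) = φ * C e₁ * X by ring,
      show φ * (C e₂ * X^2) = φ * C e₂ * X^2 by ring,
      coeff_mul_X_pow, show n+2 = (n+1)+1 from rfl, coeff_succ_mul_X]
  simp [coeff_mul_C]; ring

lemma coeff_one_mul_poly2 (φ : ℚ⟦X⟧) (e₁ e₂ : ℚ) :
    coeff 1 (φ * (1 + C e₁ * X + C e₂ * X^2)) =
      coeff 1 φ + e₁ * coeff 0 φ := by
  rw [mul_add, mul_add, mul_one, map_add, map_add,
      show φ * (C e₁ * X) = φ * C e₁ * X by ring,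
      show φ * (C e₂ * X^2) = φ * C e₂ * X * X by ring,
      show (1:ℕ) = 0+1 from rfl, coeff_succ_mul_X, coeff_succ_mul_X]
  simp [coeff_mul_C]
  ring

lemma coeff_zero_mul_poly2 (φ : ℚ⟦X⟧) (e₁ e₂ : ℚ) :
    coeff 0 (φ * (1 + C e₁ * X + C e₂ * X^2)) = coeff 0 φ := by
  simp [coeff_zero_eq_constantCoeff, map_mul, map_add]

lemma coeff_lin (r : ℚ) : coeff 0 (lin r) = 1 ∧ coeff 1 (lin r) = r ∧
    coeff 2 (lin r) = 0 ∧ coeff 3 (lin r) = 0 := by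
  refine ⟨?_, ?_, ?_, ?_⟩ <;> simp [lin, coeff_one]

theorem stmt_8 (w₁ w₂ d₁ d₂ d₃ : ℕ) (hw₁ : 0 < w₁) (hw₂ : 0 < w₂)
    (hd₁ : 0 < d₁) (hd₂ : 0 < d₂) (hd₃ : 0 < d₃)
    (Q : ℚ⟦X⟧)
    (hQ : Q = lin (d₁ : ℚ) * lin (d₂ : ℚ) * lin (d₃ : ℚ) *
        (lin (w₁ : ℚ) * lin (w₂ : ℚ))⁻¹)
    (γ₁ γ₂ : ℚ) (hγ₁ : γ₁ = coeff 1 Q) (hγ₂ : γ₂ = coeff 2 Q)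
    (S₀ S₁ : ℚ) (hS₀ : S₀ = (d₁ : ℚ) * (d₂ : ℚ) * (d₃ : ℚ) / ((w₁ : ℚ) * (w₂ : ℚ)))
    (hS₁ : S₁ = S₀ * γ₁)
    (T : ℚ⟦X⟧)
    (hT : T = 1 + C ((1 / 2) * (γ₁ - S₀)) * X
        + C ((1 / 6) * (S₀ ^ 2 + 2 * S₁ - 2 * γ₁ * S₀ - γ₁ ^ 2 - γ₂)) * X ^ 2) :
    -1 + (1 / ((w₁ : ℚ) * (w₂ : ℚ))) * coeff 2 (lin (w₁ : ℚ) * lin (w₂ : ℚ) * T) =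
      (1 / (6 * (w₁ : ℚ) ^ 3 * (w₂ : ℚ) ^ 3)) *
        ((d₁ : ℚ) ^ 2 * ((d₂ : ℚ) ^ 2 * (d₃ : ℚ) ^ 2 - (w₁ : ℚ) ^ 2 * (w₂ : ℚ) ^ 2)
          - (w₁ : ℚ) ^ 2 * (w₂ : ℚ) ^ 2 *
              ((d₂ : ℚ) ^ 2 + (d₃ : ℚ) ^ 2 + 5 * (w₁ : ℚ) ^ 2
                + 9 * (w₁ : ℚ) * (w₂ : ℚ) + 5 * (w₂ : ℚ) ^ 2
                - 6 * (d₃ : ℚ) * ((w₁ : ℚ) + (w₂ : ℚ))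
                + 3 * (d₂ : ℚ) * ((d₃ : ℚ) - 2 * ((w₁ : ℚ) + (w₂ : ℚ))))
          - 3 * (d₁ : ℚ) * (w₁ : ℚ) * (w₂ : ℚ) *
              ((w₁ : ℚ) * (w₂ : ℚ) * ((d₃ : ℚ) - 2 * ((w₁ : ℚ) + (w₂ : ℚ)))
                + (d₂ : ℚ) * ((w₁ : ℚ) * (w₂ : ℚ)
                    + (d₃ : ℚ) * ((w₁ : ℚ) + (w₂ : ℚ))))) := by
  have hw1 : (w₁ : ℚ) ≠ 0 := Nat.cast_ne_zero.2 hw₁.ne'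
  have hw2 : (w₂ : ℚ) ≠ 0 := Nat.cast_ne_zero.2 hw₂.ne'
  have hcw : constantCoeff (lin (w₁:ℚ) * lin (w₂:ℚ)) ≠ 0 := by
    simp [lin]
  have hQD : Q * (lin (w₁:ℚ) * lin (w₂:ℚ)) = lin (d₁:ℚ) * lin (d₂:ℚ) * lin (d₃:ℚ) := by
    rw [hQ, mul_assoc, PowerSeries.inv_mul_cancel _ hcw, mul_one]
  have hN : lin (d₁:ℚ) * lin (d₂:ℚ) * lin (d₃:ℚ)
      = lin (d₁:ℚ) * (1 + C ((d₂:ℚ)+(d₃:ℚ)) * X + C ((d₂:ℚ)*(d₃:ℚ)) * X^2) := by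
    rw [mul_assoc, lin_mul_lin]
  rw [hN, lin_mul_lin] at hQD
  obtain ⟨l0, l1, l2, l3⟩ := coeff_lin (d₁:ℚ)
  have h0 := congrArg (coeff 0) hQD
  have h1 := congrArg (coeff 1) hQD
  have h2 := congrArg (coeff (0+2)) hQD
  rw [coeff_zero_mul_poly2, coeff_zero_mul_poly2] at h0
  rw [coeff_one_mul_poly2, coeff_one_mul_poly2, l0, l1] at h1
  rw [coeff_mul_poly2, coeff_mul_poly2, l0, l1, l2] at h2
  rw [l0] at h0
  norm_num at h1 h2
  rw [← hγ₁] at h1 h2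
  rw [← hγ₂] at h2
  rw [coeff_zero_eq_constantCoeff] at h0
  rw [h0, mul_one] at h1 h2
  have ht0 : coeff 0 T = 1 := by simp [hT, coeff_one]
  have ht1 : coeff 1 T = (1 / 2) * (γ₁ - S₀) := by
    simp only [hT, map_add, coeff_C_mul, coeff_one, coeff_X, coeff_X_pow]; norm_num
  have ht2 : coeff 2 T = (1 / 6) * (S₀ ^ 2 + 2 * S₁ - 2 * γ₁ * S₀ - γ₁ ^ 2 - γ₂) := by
    simp only [hT, map_add, coeff_C_mul, coeff_one, coeff_X, coeff_X_pow]; norm_num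
  have hDT : lin (w₁:ℚ) * lin (w₂:ℚ) * T
      = T * (1 + C ((w₁:ℚ)+(w₂:ℚ)) * X + C ((w₁:ℚ)*(w₂:ℚ)) * X^2) := by
    rw [lin_mul_lin, mul_comm]
  rw [hDT, show (2:ℕ) = 0+2 from rfl, coeff_mul_poly2, ht0, ht1, ht2]
  have hg1 : γ₁ = (d₁:ℚ) + (d₂:ℚ) + (d₃:ℚ) - (w₁:ℚ) - (w₂:ℚ) := by
    linarith [h1]
  have hg2 : γ₂ = (d₂:ℚ)*(d₃:ℚ) + ((d₂:ℚ)+(d₃:ℚ))*(d₁:ℚ)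
      - ((w₁:ℚ)+(w₂:ℚ))*γ₁ - (w₁:ℚ)*(w₂:ℚ) := by
    linarith [h2]
  rw [hS₁, hS₀] at *
  rw [hg2, hg1]
  field_simp
  ring
end
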